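/- Every finite almost perfect group is perfect: if G is a finite group such that every endomorphism of G factoring through a commutative group is trivial, then the commutator subgroup of G equals G. -/

import Mathlib

universe u

lemma aux_map_surj {G : Type u} [Group G] :
    Function.Surjective (Abelianization.of (G := G)) := by
  rintro ⟨x⟩
  exact ⟨x, rfl⟩

/-- Every finite almost perfect group is perfect: if every endomorphism of a finite
group `G` factoring through a commutative group is trivial, then `G` is perfect. -/
theorem perfect_of_finite_almost_perfect
    {G : Type u} [Group G] [Finite G]
    (hap : ∀ (A : Type u) [CommGroup A] (f : G →* A) (g : A →* G), g.comp f = 1) :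
    commutator G = ⊤ := by
  by_contra hne
  obtain ⟨x0, hx0⟩ : ∃ x : G, x ∉ commutator G := by
    by_contra h
    push_neg at h
    exact hne ((Subgroup.eq_top_iff' _).2 h)
  have hx1 : Abelianization.of x0 ≠ 1 := by
    intro h
    exact hx0 ((QuotientGroup.eq_one_iff x0).mp h)
  obtain ⟨ι, _, n, hn, ⟨e⟩⟩ :=
    CommGroup.equiv_prod_multiplicative_zmod_of_finite (Abelianization G)
  obtain ⟨i, hi⟩ : ∃ i : ι, e (Abelianization.of x0) i ≠ 1 := by
    by_contra h
    push_neg at h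
    exact hx1 ((MulEquiv.map_eq_one_iff e).mp (funext h))
  have hn1 : 1 < n i := hn i
  haveI : NeZero (n i) := ⟨by omega⟩
  -- the surjection G → ZMod (n i)
  let ψ : G →* Multiplicative (ZMod (n i)) :=
    (Pi.evalMonoidHom (fun j => Multiplicative (ZMod (n j))) i).comp
      (e.toMonoidHom.comp Abelianization.of)
  have hψs : Function.Surjective ψ := by
    apply Function.Surjective.comp (Function.surjective_eval i)
    exact Function.Surjective.comp e.surjective aux_map_surj
  obtain ⟨x, hx⟩ := hψs (Multiplicative.ofAdd (1 : ZMod (n i)))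
  have hdvd : n i ∣ orderOf x := by
    have h1 : orderOf (ψ x) ∣ orderOf x := orderOf_map_dvd ψ x
    rwa [hx, orderOf_ofAdd_eq_addOrderOf, ZMod.addOrderOf_one] at h1
  set m := orderOf x with hm
  have hmpos : 0 < m := orderOf_pos x
  set y : G := x ^ (m / n i) with hy
  have hyn : y ^ (n i) = 1 := by
    rw [hy, ← pow_mul, Nat.div_mul_cancel hdvd, hm, pow_orderOf_eq_one]
  have hy1 : y ≠ 1 := by
    intro h
    have h2 : m ∣ m / n i := orderOf_dvd_of_pow_eq_one (hm ▸ h)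
    have h3 : 0 < m / n i := Nat.div_pos (Nat.le_of_dvd hmpos hdvd) (by omega)
    have h4 : m / n i < m := Nat.div_lt_self hmpos hn1
    exact absurd (Nat.le_of_dvd h3 h2) (by omega)
  -- the map back ZMod (n i) → G
  have hker : (zmultiplesHom (Additive G) (Additive.ofMul y)) (n i : ℤ) = 0 := by
    have h1 : y ^ (n i : ℤ) = 1 := by rw [zpow_natCast, hyn]
    show Additive.ofMul (y ^ (n i : ℤ)) = 0
    rw [h1]
    rfl
  let g0 : ZMod (n i) →+ Additive G :=
    ZMod.lift (n i) ⟨zmultiplesHom (Additive G) (Additive.ofMul y), hker⟩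
  let g : Multiplicative (ZMod (n i)) →* G := AddMonoidHom.toMultiplicativeLeft g0
  have hg1 : g (Multiplicative.ofAdd (1 : ZMod (n i))) = y := by
    have : ((1 : ℤ) : ZMod (n i)) = (1 : ZMod (n i)) := by push_cast; ring
    simp only [g, AddMonoidHom.coe_toMultiplicativeLeft, Function.comp_apply, toAdd_ofAdd]
    rw [← this]
    show Additive.toMul (ZMod.lift (n i) ⟨_, hker⟩ ((1 : ℤ) : ZMod (n i))) = y
    rw [ZMod.lift_coe]
    show Additive.toMul ((1 : ℤ) • Additive.ofMul y) = y
    simp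
  -- assemble through a Type u commutative group
  let A : Type u := ULift.{u} (Multiplicative (ZMod (n i)))
  let f' : G →* A := (MulEquiv.ulift (α := Multiplicative (ZMod (n i)))).symm.toMonoidHom.comp ψ
  let g' : A →* G := g.comp (MulEquiv.ulift (α := Multiplicative (ZMod (n i)))).toMonoidHom
  have h := hap A f' g'
  have hx' : g' (f' x) = 1 := by
    rw [← MonoidHom.comp_apply, h]; rfl
  apply hy1
  have : g' (f' x) = y := by
    simp only [f', g', MonoidHom.comp_apply, MulEquiv.coe_toMonoidHom]
    rw [MulEquiv.apply_symm_apply, hx, hg1]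
  rw [← this, hx']
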